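/- Consider n items, each independently defective with probability p ∈ (0,1), and a random design of T₁ tests in which each item is placed in each test independently with probability π ∈ (0,1), independently of the defectivity. Call an item undiscovered if it is defective or if every test containing it contains at least one defective item. Then the expected number of undiscovered items equals n·[p + (1-p)·Σ_{k=0}^{n-1} C(n-1,k) p^k (1-p)^{n-1-k} (1 - π(1-π)^k)^{T₁}]. Consequently, conservative two-stage testing with this Bernoulli first stage uses T₁ plus this quantity tests in expectation. -/

import Mathlib

open MeasureTheory Finset

section BernoulliGroupTestingAux

/-- The Bernoulli weight of a boolean value. -/
def bgB (q : ℝ) (b : Bool) : ℝ := if b then q else 1 - q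

lemma bg_sum_prod {ι κ : Type*} [Fintype ι] [Fintype κ] [DecidableEq ι] (w : ι → κ → ℝ) :
    ∑ g : ι → κ, ∏ a, w a (g a) = ∏ a, ∑ x, w a x := by
  rw [Finset.prod_univ_sum, Fintype.piFinset_univ]

lemma bg_norm {α : Type*} [Fintype α] [DecidableEq α] (q : ℝ) :
    ∑ g : α → Bool, ∏ a, bgB q (g a) = 1 := by
  rw [bg_sum_prod (w := fun _ b => bgB q b), Finset.prod_eq_one]
  intro a _
  simp [bgB]

lemma bg_weight {α : Type*} [Fintype α] [DecidableEq α] (q : ℝ) (g : α → Bool) :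
    ∏ a, bgB q (g a)
      = q ^ (univ.filter (fun a => g a = true)).card
        * (1 - q) ^ (Fintype.card α - (univ.filter (fun a => g a = true)).card) := by
  classical
  rw [show (∏ a, bgB q (g a)) = ∏ a, (if g a = true then q else 1 - q) from by
    apply Finset.prod_congr rfl; intro a _; cases g a <;> simp [bgB]]
  rw [Finset.prod_ite]
  simp only [Finset.prod_const]
  congr 1
  rw [Finset.filter_not, Finset.card_sdiff_of_subset (Finset.filter_subset _ _)]
  simp

lemma bg_bad (n : ℕ) (π : ℝ) (i : Fin n) (S : Fin n → Bool) (hSi : S i = false) :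
    ∑ v : Fin n → Bool, (∏ j, bgB π (v j)) *
      (if v i = true ∧ ∀ j, S j = true → v j = false then 1 else 0)
    = π * (1 - π) ^ (univ.filter (fun j => S j = true)).card := by
  classical
  have key : ∀ v : Fin n → Bool,
      (∏ j, bgB π (v j)) * (if v i = true ∧ ∀ j, S j = true → v j = false then 1 else 0)
      = ∏ j, (bgB π (v j) * (if j = i then (if v j then 1 else 0)
          else if S j = true then (if v j then 0 else 1) else 1)) := by
    intro v
    rw [Finset.prod_mul_distrib]
    congr 1
    by_cases hb : v i = true ∧ ∀ j, S j = true → v j = false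
    · rw [if_pos hb, Finset.prod_eq_one]
      intro j _
      by_cases hj : j = i
      · subst hj; simp [hb.1]
      · by_cases hS : S j = true
        · simp [hj, hS, hb.2 j hS]
        · simp [hj, hS]
    · rw [if_neg hb, eq_comm]
      push_neg at hb
      by_cases hvi : v i = true
      · obtain ⟨j, hSj, hvj⟩ := hb hvi
        refine Finset.prod_eq_zero (Finset.mem_univ j) ?_
        have hji : j ≠ i := by rintro rfl; rw [hSi] at hSj; exact Bool.noConfusion hSj
        simp [hji, hSj, hvj]
      · refine Finset.prod_eq_zero (Finset.mem_univ i) ?_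
        simp [hvi]
  simp only [key]
  rw [bg_sum_prod (w := fun j b => bgB π b * (if j = i then (if b = true then 1 else 0)
    else if S j = true then (if b = true then 0 else 1) else 1))]
  have hfac : ∀ j : Fin n, (∑ x : Bool, bgB π x * (if j = i then (if x then 1 else 0)
      else if S j = true then (if x then 0 else 1) else 1))
      = if j = i then π else if S j = true then 1 - π else 1 := by
    intro j
    by_cases hj : j = i
    · simp [hj, bgB]
    · by_cases hS : S j = true <;> simp [hj, hS, bgB]
  simp only [hfac]
  rw [← Finset.prod_filter_mul_prod_filter_not univ (fun j => j = i)]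
  have h1 : univ.filter (fun j => j = i) = {i} := by ext j; simp
  rw [h1, Finset.prod_singleton, if_pos rfl]
  congr 1
  rw [show ∏ j ∈ univ.filter (fun j => ¬ j = i),
        (if j = i then π else if S j = true then 1 - π else 1)
      = ∏ j ∈ univ.filter (fun j => ¬ j = i), (if S j = true then 1-π else 1) from
    Finset.prod_congr rfl (fun j hj => by rw [if_neg (Finset.mem_filter.mp hj).2])]
  rw [Finset.prod_ite, Finset.prod_const, Finset.prod_const, one_pow, mul_one]
  congr 1
  rw [Finset.filter_filter]
  apply Finset.card_nbij id (fun j hj => by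
    simp only [coe_filter, mem_univ, true_and, Set.mem_setOf_eq] at hj ⊢; exact hj.2)
  · intro a ha b hb h; exact h
  · intro j hj
    simp only [Set.mem_image, mem_coe, mem_filter, mem_univ, true_and] at hj ⊢
    refine ⟨j, ⟨?_, hj⟩, rfl⟩
    rintro rfl; rw [hSi] at hj; exact Bool.noConfusion hj

lemma bg_test (n : ℕ) (π : ℝ) (i : Fin n) (S : Fin n → Bool) (hSi : S i = false) :
    ∑ v : Fin n → Bool, (∏ j, bgB π (v j)) *
      (if v i = true → ∃ j, v j = true ∧ S j = true then 1 else 0)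
    = 1 - π * (1 - π) ^ (univ.filter (fun j => S j = true)).card := by
  classical
  have key : ∀ v : Fin n → Bool,
      (if v i = true → ∃ j, v j = true ∧ S j = true then (1:ℝ) else 0)
      = 1 - (if v i = true ∧ ∀ j, S j = true → v j = false then 1 else 0) := by
    intro v
    by_cases h : v i = true → ∃ j, v j = true ∧ S j = true
    · rw [if_pos h, if_neg, sub_zero]
      rintro ⟨hvi, hall⟩
      obtain ⟨j, hvj, hSj⟩ := h hvi
      rw [hall j hSj] at hvj; exact Bool.noConfusion hvj
    · rw [if_neg h, if_pos, sub_self]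
      push_neg at h
      exact ⟨h.1, fun j hSj => by
        rcases Bool.eq_false_or_eq_true (v j) with h' | h'
        · exact absurd hSj (h.2 j h')
        · exact h'⟩
  simp only [key, mul_sub, mul_one, Finset.sum_sub_distrib]
  rw [bg_norm, bg_bad n π i S hSi]

lemma bg_matrix (n T₁ : ℕ) (π : ℝ) (i : Fin n) (S : Fin n → Bool) (hSi : S i = false) :
    ∑ M : Fin T₁ → Fin n → Bool, (∏ t, ∏ j, bgB π (M t j)) *
      (if ∀ t, M t i = true → ∃ j, M t j = true ∧ S j = true then 1 else 0)
    = (1 - π * (1 - π) ^ (univ.filter (fun j => S j = true)).card) ^ T₁ := by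
  classical
  have key : ∀ M : Fin T₁ → Fin n → Bool,
      (∏ t, ∏ j, bgB π (M t j)) *
        (if ∀ t, M t i = true → ∃ j, M t j = true ∧ S j = true then (1:ℝ) else 0)
      = ∏ t, ((∏ j, bgB π (M t j)) *
          (if M t i = true → ∃ j, M t j = true ∧ S j = true then 1 else 0)) := by
    intro M
    rw [Finset.prod_mul_distrib]
    congr 1
    by_cases h : ∀ t, M t i = true → ∃ j, M t j = true ∧ S j = true
    · rw [if_pos h, eq_comm, Finset.prod_eq_one]
      intro t _; rw [if_pos (h t)]
    · rw [if_neg h, eq_comm]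
      push_neg at h
      obtain ⟨t, ht⟩ := h
      exact Finset.prod_eq_zero (Finset.mem_univ t) (by rw [if_neg]; simpa using ht)
  simp only [key]
  have step := bg_sum_prod (fun (t : Fin T₁) (v : Fin n → Bool) => (∏ j, bgB π (v j)) *
      (if v i = true → ∃ j, v j = true ∧ S j = true then (1:ℝ) else 0))
  rw [step, Finset.prod_congr rfl (fun t _ => bg_test n π i S hSi), Finset.prod_const]
  simp

lemma bg_norm2 (n T₁ : ℕ) (π : ℝ) :
    ∑ M : Fin T₁ → Fin n → Bool, ∏ t, ∏ j, bgB π (M t j) = 1 := by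
  classical
  have step := bg_sum_prod (fun (t : Fin T₁) (v : Fin n → Bool) => ∏ j, bgB π (v j))
  rw [step, Finset.prod_eq_one]
  intro t _
  exact bg_norm π

lemma bg_defect (n : ℕ) (p : ℝ) (i : Fin n) :
    ∑ S : Fin n → Bool, (∏ j, bgB p (S j)) * (if S i = true then 1 else 0) = p := by
  classical
  have key : ∀ S : Fin n → Bool,
      (∏ j, bgB p (S j)) * (if S i = true then (1:ℝ) else 0)
      = ∏ j, (bgB p (S j) * (if j = i then (if S j = true then 1 else 0) else 1)) := by
    intro S
    rw [Finset.prod_mul_distrib]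
    congr 1
    by_cases h : S i = true
    · rw [if_pos h, eq_comm, Finset.prod_eq_one]
      intro j _
      by_cases hj : j = i
      · subst hj; simp [h]
      · simp [hj]
    · rw [if_neg h, eq_comm]
      exact Finset.prod_eq_zero (Finset.mem_univ i) (by simp [h])
  simp only [key]
  have step := bg_sum_prod (fun (j : Fin n) (b : Bool) =>
    bgB p b * (if j = i then (if b = true then 1 else 0) else 1))
  rw [step]
  have hfac : ∀ j : Fin n, (∑ b : Bool, bgB p b * (if j = i then (if b = true then (1:ℝ) else 0) else 1))
      = if j = i then p else 1 := by
    intro j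
    by_cases hj : j = i <;> simp [hj, bgB]
  rw [Finset.prod_congr rfl (fun j _ => hfac j), Finset.prod_ite_eq' univ i (fun _ => p)]
  simp

lemma bg_binom (n : ℕ) (p : ℝ) (i : Fin n) (h : ℕ → ℝ) :
    ∑ S : Fin n → Bool, (∏ j, bgB p (S j)) * (if S i = true then 0 else 1) *
        h ((univ.filter (fun j => S j = true)).card)
    = (1 - p) * ∑ k ∈ Finset.range n,
        (Nat.choose (n-1) k : ℝ) * p ^ k * (1-p) ^ (n-1-k) * h k := by
  classical
  have hn : 1 ≤ n := i.pos
  have key : ∀ S : Fin n → Bool,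
      (∏ j, bgB p (S j)) * (if S i = true then (0:ℝ) else 1) *
        h ((univ.filter (fun j => S j = true)).card)
      = if S i = false then
          (∏ j, bgB p (S j)) * h ((univ.filter (fun j => S j = true)).card) else 0 := by
    intro S; cases hSi : S i <;> simp [hSi]
  simp only [key]
  rw [← Finset.sum_filter]
  have hbij :
      ∑ S ∈ univ.filter (fun S : Fin n → Bool => S i = false),
        (∏ j, bgB p (S j)) * h ((univ.filter (fun j => S j = true)).card)
      = ∑ A ∈ (univ.erase i).powerset,
          p ^ A.card * (1-p) ^ (n - A.card) * h A.card := by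
    refine Finset.sum_nbij' (fun S => univ.filter (fun j => S j = true))
      (fun A => fun j => decide (j ∈ A)) ?_ ?_ ?_ ?_ ?_
    · intro S hS
      simp only [mem_filter, mem_univ, true_and] at hS
      rw [Finset.mem_powerset]
      intro j hj
      simp only [mem_filter, mem_univ, true_and] at hj
      refine Finset.mem_erase.mpr ⟨?_, Finset.mem_univ j⟩
      rintro rfl; rw [hS] at hj; exact Bool.noConfusion hj
    · intro A hA
      simp only [mem_filter, mem_univ, true_and]
      rw [Finset.mem_powerset] at hA
      simp only [decide_eq_false_iff_not]
      intro hiA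
      exact absurd (hA hiA) (by simp)
    · intro S hS
      funext j
      simp only [mem_filter, mem_univ, true_and]
      by_cases hj : S j = true
      · simp [hj]
      · simp only [Bool.not_eq_true] at hj
        simp [hj]
    · intro A hA
      ext j
      simp
    · intro S hS
      rw [bg_weight, Fintype.card_fin]
  rw [hbij, Finset.sum_powerset]
  rw [Finset.card_erase_of_mem (Finset.mem_univ i), Finset.card_univ, Fintype.card_fin]
  rw [Nat.sub_add_cancel hn, Finset.mul_sum]
  refine Finset.sum_congr rfl ?_
  intro k hk
  rw [Finset.mem_range] at hk
  have hk' : k ≤ n - 1 := Nat.le_sub_one_of_lt hk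
  have hcongr : ∀ A ∈ Finset.powersetCard k (univ.erase i),
      p ^ A.card * (1-p) ^ (n - A.card) * h A.card = p ^ k * (1-p) ^ (n - k) * h k := by
    intro A hA
    rw [Finset.mem_powersetCard] at hA
    rw [hA.2]
  rw [Finset.sum_congr rfl hcongr, Finset.sum_const, Finset.card_powersetCard,
    Finset.card_erase_of_mem (Finset.mem_univ i), Finset.card_univ, Fintype.card_fin,
    nsmul_eq_mul]
  have hexp : n - k = (n - 1 - k) + 1 := by omega
  rw [hexp, pow_succ]
  ring

lemma bg_item (n T₁ : ℕ) (p π : ℝ) (i : Fin n) :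
    ∑ ω : (Fin n → Bool) × (Fin T₁ → Fin n → Bool),
      ((∏ j, bgB p (ω.1 j)) * ∏ t, ∏ j, bgB π (ω.2 t j)) *
      (if ω.1 i = true ∨ ∀ t, ω.2 t i = true → ∃ j, ω.2 t j = true ∧ ω.1 j = true
        then 1 else 0)
    = p + (1-p) * ∑ k ∈ Finset.range n,
        (Nat.choose (n-1) k : ℝ) * p ^ k * (1-p) ^ (n-1-k) * (1 - π * (1-π) ^ k) ^ T₁ := by
  classical
  rw [Fintype.sum_prod_type]
  have inner : ∀ S : Fin n → Bool,
      (∑ M : Fin T₁ → Fin n → Bool,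
        ((∏ j, bgB p (S j)) * ∏ t, ∏ j, bgB π (M t j)) *
        (if S i = true ∨ ∀ t, M t i = true → ∃ j, M t j = true ∧ S j = true then 1 else 0))
      = (∏ j, bgB p (S j)) *
          (if S i = true then 1
            else (1 - π * (1-π) ^ ((univ.filter (fun j => S j = true)).card)) ^ T₁) := by
    intro S
    by_cases hSi : S i = true
    · simp only [hSi, true_or, if_true, mul_one]
      rw [← Finset.mul_sum, bg_norm2, mul_one]
    · have hSi' : S i = false := by simpa using hSi
      rw [if_neg hSi]
      have heq : ∀ M : Fin T₁ → Fin n → Bool,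
          (if S i = true ∨ ∀ t, M t i = true → ∃ j, M t j = true ∧ S j = true then (1:ℝ) else 0)
          = (if ∀ t, M t i = true → ∃ j, M t j = true ∧ S j = true then 1 else 0) := by
        intro M
        congr 1
        simp [hSi]
      simp only [heq, mul_assoc]
      rw [← Finset.mul_sum]
      congr 1
      exact bg_matrix n T₁ π i S hSi'
  rw [Finset.sum_congr rfl (fun S _ => inner S)]
  have split : ∀ S : Fin n → Bool,
      (∏ j, bgB p (S j)) *
          (if S i = true then 1
            else (1 - π * (1-π) ^ ((univ.filter (fun j => S j = true)).card)) ^ T₁)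
      = (∏ j, bgB p (S j)) * (if S i = true then 1 else 0)
        + (∏ j, bgB p (S j)) * (if S i = true then 0 else 1) *
            (1 - π * (1-π) ^ ((univ.filter (fun j => S j = true)).card)) ^ T₁ := by
    intro S
    by_cases hSi : S i = true <;> simp [hSi]
  rw [Finset.sum_congr rfl (fun S _ => split S), Finset.sum_add_distrib,
    bg_defect n p i, bg_binom n p i (fun k => (1 - π * (1-π) ^ k) ^ T₁)]

lemma bg_meas (q : ℝ) (hq0 : 0 ≤ q) (hq1 : q ≤ 1) (b : Bool) :
    (((PMF.bernoulli (Real.toNNReal q) (Real.toNNReal_le_one.mpr hq1)).toMeasure {b}).toReal)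
    = bgB q b := by
  rw [PMF.toMeasure_apply_singleton _ _ (measurableSet_singleton b), PMF.bernoulli_apply]
  cases b
  · simp only [cond_false, bgB, Bool.false_eq_true, if_false]
    rw [ENNReal.coe_toReal,
      NNReal.coe_sub (Real.toNNReal_le_one.mpr hq1), Real.coe_toNNReal _ hq0, NNReal.coe_one]
  · simp only [cond_true, bgB, if_true]
    rw [ENNReal.coe_toReal, Real.coe_toNNReal _ hq0]

lemma bg_count {n : ℕ} (P : Fin n → Prop) [DecidablePred P] :
    (Nat.card {i : Fin n // P i} : ℝ) = ∑ i : Fin n, if P i then (1:ℝ) else 0 := by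
  rw [Nat.card_eq_fintype_card, Fintype.card_subtype, Finset.card_filter]
  push_cast [apply_ite (Nat.cast : ℕ → ℝ)]
  rfl

lemma bg_integral (n T₁ : ℕ) (p π : ℝ) (hp0 : 0 ≤ p) (hp1 : p ≤ 1) (hπ0 : 0 ≤ π) (hπ1 : π ≤ 1)
    (f : (Fin n → Bool) × (Fin T₁ → Fin n → Bool) → ℝ) :
    (∫ ω, f ω ∂(Measure.prod
        (Measure.pi fun _ : Fin n =>
          (PMF.bernoulli (Real.toNNReal p) (Real.toNNReal_le_one.mpr hp1)).toMeasure)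
        (Measure.pi fun _ : Fin T₁ => Measure.pi fun _ : Fin n =>
          (PMF.bernoulli (Real.toNNReal π) (Real.toNNReal_le_one.mpr hπ1)).toMeasure)))
    = ∑ ω : (Fin n → Bool) × (Fin T₁ → Fin n → Bool),
        ((∏ j, bgB p (ω.1 j)) * ∏ t, ∏ j, bgB π (ω.2 t j)) * f ω := by
  rw [integral_fintype (Integrable.of_finite)]
  refine Finset.sum_congr rfl fun ω _ => ?_
  rw [smul_eq_mul]
  congr 1
  rw [measureReal_def]
  rw [show ({ω} : Set ((Fin n → Bool) × (Fin T₁ → Fin n → Bool))) = {ω.1} ×ˢ {ω.2} from by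
    rw [Set.singleton_prod_singleton]]
  rw [Measure.prod_prod]
  rw [← Set.univ_pi_singleton ω.1, Measure.pi_pi]
  rw [← Set.univ_pi_singleton ω.2, Measure.pi_pi]
  have h2 : ∀ t : Fin T₁,
      ((Measure.pi fun _ : Fin n =>
        (PMF.bernoulli (Real.toNNReal π) (Real.toNNReal_le_one.mpr hπ1)).toMeasure) {ω.2 t})
      = ∏ j, ((PMF.bernoulli (Real.toNNReal π) (Real.toNNReal_le_one.mpr hπ1)).toMeasure
          {ω.2 t j}) := by
    intro t
    rw [← Set.univ_pi_singleton (ω.2 t), Measure.pi_pi]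
  rw [Finset.prod_congr rfl (fun t _ => h2 t)]
  rw [ENNReal.toReal_mul, ENNReal.toReal_prod, ENNReal.toReal_prod]
  congr 1
  · exact Finset.prod_congr rfl fun j _ => bg_meas p hp0 hp1 (ω.1 j)
  · refine Finset.prod_congr rfl fun t _ => ?_
    rw [ENNReal.toReal_prod]
    exact Finset.prod_congr rfl fun j _ => bg_meas π hπ0 hπ1 (ω.2 t j)

end BernoulliGroupTestingAux

/-- Conservative two-stage testing with a Bernoulli first stage. -/
theorem bernoulli_stage_expected_tests (n T₁ : ℕ) (p π : ℝ)
    (hp : p ∈ Set.Ioo (0 : ℝ) 1) (hπ : π ∈ Set.Ioo (0 : ℝ) 1) :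
    (∫ ω : (Fin n → Bool) × (Fin T₁ → Fin n → Bool),
        (Nat.card {i : Fin n // ω.1 i = true ∨
            ∀ t : Fin T₁, ω.2 t i = true →
              ∃ j : Fin n, ω.2 t j = true ∧ ω.1 j = true} : ℝ)
        ∂(Measure.prod
            (Measure.pi fun _ : Fin n =>
              (PMF.bernoulli (Real.toNNReal p) (Real.toNNReal_le_one.mpr hp.2.le)).toMeasure)
            (Measure.pi fun _ : Fin T₁ => Measure.pi fun _ : Fin n =>
              (PMF.bernoulli (Real.toNNReal π) (Real.toNNReal_le_one.mpr hπ.2.le)).toMeasure)))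
      = (n : ℝ) * (p + (1 - p) * ∑ k ∈ Finset.range n,
          (Nat.choose (n - 1) k : ℝ) * p ^ k * (1 - p) ^ (n - 1 - k) *
            (1 - π * (1 - π) ^ k) ^ T₁) ∧
    (∫ ω : (Fin n → Bool) × (Fin T₁ → Fin n → Bool),
        ((T₁ : ℝ) + (Nat.card {i : Fin n // ω.1 i = true ∨
            ∀ t : Fin T₁, ω.2 t i = true →
              ∃ j : Fin n, ω.2 t j = true ∧ ω.1 j = true} : ℝ))
        ∂(Measure.prod
            (Measure.pi fun _ : Fin n =>
              (PMF.bernoulli (Real.toNNReal p) (Real.toNNReal_le_one.mpr hp.2.le)).toMeasure)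
            (Measure.pi fun _ : Fin T₁ => Measure.pi fun _ : Fin n =>
              (PMF.bernoulli (Real.toNNReal π) (Real.toNNReal_le_one.mpr hπ.2.le)).toMeasure)))
      = (T₁ : ℝ) + (n : ℝ) * (p + (1 - p) * ∑ k ∈ Finset.range n,
          (Nat.choose (n - 1) k : ℝ) * p ^ k * (1 - p) ^ (n - 1 - k) *
            (1 - π * (1 - π) ^ k) ^ T₁) := by
  classical
  have hmain :
      (∫ ω : (Fin n → Bool) × (Fin T₁ → Fin n → Bool),
        (Nat.card {i : Fin n // ω.1 i = true ∨
            ∀ t : Fin T₁, ω.2 t i = true →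
              ∃ j : Fin n, ω.2 t j = true ∧ ω.1 j = true} : ℝ)
        ∂(Measure.prod
            (Measure.pi fun _ : Fin n =>
              (PMF.bernoulli (Real.toNNReal p) (Real.toNNReal_le_one.mpr hp.2.le)).toMeasure)
            (Measure.pi fun _ : Fin T₁ => Measure.pi fun _ : Fin n =>
              (PMF.bernoulli (Real.toNNReal π) (Real.toNNReal_le_one.mpr hπ.2.le)).toMeasure)))
      = (n : ℝ) * (p + (1 - p) * ∑ k ∈ Finset.range n,
          (Nat.choose (n - 1) k : ℝ) * p ^ k * (1 - p) ^ (n - 1 - k) *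
            (1 - π * (1 - π) ^ k) ^ T₁) := by
    rw [bg_integral n T₁ p π hp.1.le hp.2.le hπ.1.le hπ.2.le]
    have hcnt : ∀ ω : (Fin n → Bool) × (Fin T₁ → Fin n → Bool),
        (Nat.card {i : Fin n // ω.1 i = true ∨
            ∀ t : Fin T₁, ω.2 t i = true →
              ∃ j : Fin n, ω.2 t j = true ∧ ω.1 j = true} : ℝ)
        = ∑ i : Fin n, (if ω.1 i = true ∨
            ∀ t : Fin T₁, ω.2 t i = true →
              ∃ j : Fin n, ω.2 t j = true ∧ ω.1 j = true then (1:ℝ) else 0) := by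
      intro ω
      exact bg_count _
    rw [Finset.sum_congr rfl (fun ω _ => by rw [hcnt ω, Finset.mul_sum])]
    rw [Finset.sum_comm]
    rw [Finset.sum_congr rfl (fun i _ => bg_item n T₁ p π i)]
    rw [Finset.sum_const, Finset.card_univ, Fintype.card_fin, nsmul_eq_mul]
  refine ⟨hmain, ?_⟩
  rw [integral_add (integrable_const _) (Integrable.of_finite), integral_const]
  have : IsProbabilityMeasure (Measure.prod
            (Measure.pi fun _ : Fin n =>
              (PMF.bernoulli (Real.toNNReal p) (Real.toNNReal_le_one.mpr hp.2.le)).toMeasure)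
            (Measure.pi fun _ : Fin T₁ => Measure.pi fun _ : Fin n =>
              (PMF.bernoulli (Real.toNNReal π) (Real.toNNReal_le_one.mpr hπ.2.le)).toMeasure)) :=
    inferInstance
  rw [probReal_univ, one_smul, hmain]
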